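/- There is a universal constant C > 0 with the following property. Fix m ≥ 1 and let d, d', d₂ ∈ ℕ with d ≤ d₂ and d' ≤ d₂. For every real Banach space E, every affine isometric action ρ of H₃(ℤ[t₁,...,t_m]) on E, every ξ ∈ E and every p ∈ Poly(d,d'), writing η = (1/|Poly(d₂,d₂)|)·∑_{q∈Poly(d₂,d₂)} ρ(z(q))ξ, one has ‖ρ(z(p))η − η‖ ≤ C·(d+m)^m·(1/2)^{d₂−d'}·max_{t̲∈B^d} ‖ξ − ρ(z(2^{d₂}·t̲))ξ‖. -/

import Mathlib

/-- The Heisenberg group over a commutative ring `R`: upper unitriangular `3 × 3`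
matrices, recorded by their three above-diagonal entries.  `⟨a, b, c⟩` corresponds to
the matrix `[[1, a, c], [0, 1, b], [0, 0, 1]]`. -/
structure Heisenberg (R : Type*) [CommRing R] where
  a : R
  b : R
  c : R

namespace Heisenberg

variable {R : Type*} [CommRing R]

instance : Mul (Heisenberg R) :=
  ⟨fun p q => ⟨p.a + q.a, p.b + q.b, p.c + q.c + p.a * q.b⟩⟩

instance : One (Heisenberg R) := ⟨⟨0, 0, 0⟩⟩

instance : Inv (Heisenberg R) := ⟨fun p => ⟨-p.a, -p.b, -p.c + p.a * p.b⟩⟩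

theorem mul_def (p q : Heisenberg R) :
    p * q = ⟨p.a + q.a, p.b + q.b, p.c + q.c + p.a * q.b⟩ := rfl

theorem one_def : (1 : Heisenberg R) = ⟨0, 0, 0⟩ := rfl

theorem inv_def (p : Heisenberg R) : p⁻¹ = ⟨-p.a, -p.b, -p.c + p.a * p.b⟩ := rfl

instance : Group (Heisenberg R) where
  mul_assoc p q r := by
    simp only [mul_def, mk.injEq]
    exact ⟨by ring, by ring, by ring⟩
  one_mul p := by
    cases p
    simp only [one_def, mul_def, mk.injEq]
    exact ⟨by ring, by ring, by ring⟩
  mul_one p := by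
    cases p
    simp only [one_def, mul_def, mk.injEq]
    exact ⟨by ring, by ring, by ring⟩
  inv_mul_cancel p := by
    cases p
    simp only [one_def, mul_def, inv_def, mk.injEq]
    exact ⟨by ring, by ring, by ring⟩

/-- The element `x(p)`, with `p` in position `(1,2)`. -/
def x (p : R) : Heisenberg R := ⟨p, 0, 0⟩

/-- The element `y(p)`, with `p` in position `(2,3)`. -/
def y (p : R) : Heisenberg R := ⟨0, p, 0⟩

/-- The central element `z(p)`, with `p` in position `(1,3)`. -/
def z (p : R) : Heisenberg R := ⟨0, 0, p⟩

end Heisenberg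

/-- Index type for monomials of total degree at most `d` in `m` variables. -/
def DegIdx (m d : ℕ) := {v : Fin m → Fin (d + 1) // (∑ i, ((v i : ℕ))) ≤ d}

instance (m d : ℕ) : Fintype (DegIdx m d) := by unfold DegIdx; infer_instance
instance (m d : ℕ) : DecidableEq (DegIdx m d) := by unfold DegIdx; infer_instance

/-- The monomial `∏ i, t_i ^ (v i)` corresponding to an index `v`. -/
noncomputable def monOf {m d : ℕ} (v : DegIdx m d) : MvPolynomial (Fin m) ℤ :=
  ∏ i, MvPolynomial.X i ^ ((v.1 i : ℕ))

/-- `Poly(d, d')`: the finite set of integer polynomials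
`∑_{t̲ ∈ B^d} c_{t̲}·t̲` with `0 ≤ c_{t̲} ≤ 2^{d'} − 1`, where `B^d` is the set of
monomials of total degree at most `d`. -/
noncomputable def PolyFinset (m d d' : ℕ) : Finset (MvPolynomial (Fin m) ℤ) :=
  Finset.image
    (fun c : DegIdx m d → Fin (2 ^ d') =>
      ∑ v : DegIdx m d, MvPolynomial.C ((c v : ℕ) : ℤ) * monOf v)
    Finset.univ

/-- `B^d`: the set of monomials of total degree at most `d` (including `1`). -/
def BSet (m d : ℕ) : Set (MvPolynomial (Fin m) ℤ) :=
  {p | ∃ v : Fin m → ℕ, (∑ i, v i) ≤ d ∧ p = ∏ i, MvPolynomial.X i ^ v i}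

/-- The average `(1/|Poly(d₂,d₂)|)·∑_{q ∈ Poly(d₂,d₂)} ρ(z(q))ξ`. -/
noncomputable def zAvg {m : ℕ} {E : Type*} [NormedAddCommGroup E] [NormedSpace ℝ E]
    (ρ : Heisenberg (MvPolynomial (Fin m) ℤ) →* (E ≃ᵃⁱ[ℝ] E)) (d₂ : ℕ) (ξ : E) : E :=
  ((PolyFinset m d₂ d₂).card : ℝ)⁻¹ • ∑ q ∈ PolyFinset m d₂ d₂, (ρ (Heisenberg.z q)) ξ

namespace Heisenberg
theorem z_add {R : Type*} [CommRing R] (q r : R) : z (q + r) = z q * z r := by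
  simp [z, mul_def]
theorem z_zero {R : Type*} [CommRing R] : z (0 : R) = 1 := rfl
end Heisenberg

noncomputable def expOf {m d : ℕ} (v : DegIdx m d) : Fin m →₀ ℕ :=
  Finsupp.equivFunOnFinite.symm fun i => (v.1 i : ℕ)

lemma monOf_eq_monomial {m d : ℕ} (v : DegIdx m d) (a : ℤ) :
    MvPolynomial.C a * monOf v = MvPolynomial.monomial (expOf v) a := by
  rw [MvPolynomial.monomial_eq, monOf]
  congr 1
  rw [Finsupp.prod_pow]
  rfl

lemma expOf_injective {m d : ℕ} : Function.Injective (expOf (m := m) (d := d)) := by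
  intro v w h
  apply Subtype.ext
  funext i
  have h2 := DFunLike.congr_fun h i
  simp only [expOf, Finsupp.coe_equivFunOnFinite_symm] at h2
  exact Fin.ext h2

lemma coeff_sum_monOf {m d : ℕ} (f : DegIdx m d → ℤ) (w : DegIdx m d) :
    MvPolynomial.coeff (expOf w) (∑ v : DegIdx m d, MvPolynomial.C (f v) * monOf v) = f w := by
  rw [MvPolynomial.coeff_sum, Finset.sum_eq_single w]
  · rw [monOf_eq_monomial, MvPolynomial.coeff_monomial, if_pos rfl]
  · intro v _ hv
    rw [monOf_eq_monomial, MvPolynomial.coeff_monomial, if_neg]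
    exact fun h => hv (expOf_injective h)
  · simp

lemma polyRep_injective (m d d' : ℕ) :
    Function.Injective (fun c : DegIdx m d → Fin (2 ^ d') =>
      ∑ v : DegIdx m d, MvPolynomial.C ((c v : ℕ) : ℤ) * monOf v) := by
  intro c c' h
  funext v
  have h2 := congrArg (MvPolynomial.coeff (expOf v)) h
  rw [coeff_sum_monOf (fun v => ((c v : ℕ) : ℤ)), coeff_sum_monOf (fun v => ((c' v : ℕ) : ℤ))] at h2
  exact Fin.ext (by exact_mod_cast h2)

def degCast {m d d₂ : ℕ} (h : d ≤ d₂) (v : DegIdx m d) : DegIdx m d₂ :=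
  ⟨fun i => ⟨(v.1 i : ℕ), by have := (v.1 i).isLt; omega⟩, by simpa using v.2.trans h⟩

lemma monOf_degCast {m d d₂ : ℕ} (h : d ≤ d₂) (v : DegIdx m d) :
    monOf (degCast h v) = monOf v := rfl

lemma degCast_injective {m d d₂ : ℕ} (h : d ≤ d₂) :
    Function.Injective (degCast (m := m) h) := by
  intro v w hvw
  apply Subtype.ext
  funext i
  have h2 := congrArg (fun u : DegIdx m d₂ => (u.1 i : ℕ)) hvw
  exact Fin.ext h2

lemma card_degIdx_le (m d : ℕ) : Fintype.card (DegIdx m d) ≤ (d + 1) ^ m := by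
  calc Fintype.card (DegIdx m d) ≤ Fintype.card (Fin m → Fin (d + 1)) :=
        Fintype.card_le_of_injective (fun v => v.1) (fun a b hab => Subtype.ext hab)
    _ = (d + 1) ^ m := by simp

lemma fin_overflow_sum {n A : ℕ} (hn : 0 < n) (hA : A ≤ n) :
    ∑ x : Fin n, ((x : ℕ) + A) / n ≤ A := by
  have key : ∀ x : Fin n, ((x : ℕ) + A) / n = if n ≤ (x : ℕ) + A then 1 else 0 := by
    intro x
    have := x.isLt
    split
    · exact Nat.div_eq_of_lt_le (by omega) (by omega)
    · exact Nat.div_eq_of_lt (by omega)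
  rw [Finset.sum_congr rfl (fun x _ => key x), Finset.sum_boole, Nat.cast_id]
  calc (Finset.univ.filter (fun x : Fin n => n ≤ (x : ℕ) + A)).card
      ≤ (Finset.range A).card := by
        refine Finset.card_le_card_of_injOn (fun x => (x : ℕ) + A - n) ?_ ?_
        · intro x hx
          simp only [Finset.coe_filter, Finset.mem_filter, Finset.mem_univ, true_and, Set.mem_setOf_eq] at hx
          have := x.isLt
          refine Finset.mem_range.mpr ?_
          show (x : ℕ) + A - n < A
          omega
        · intro x hx y hy hxy
          simp only [Finset.coe_filter, Set.mem_setOf_eq] at hx hy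
          have hx2 := x.isLt; have hy2 := y.isLt
          have hxy' : (x : ℕ) + A - n = (y : ℕ) + A - n := hxy
          exact Fin.ext (by omega)
    _ = A := Finset.card_range A

open Fin.NatCast in
lemma fin_add_decomp {n : ℕ} [NeZero n] {A : ℕ} (hA : A < n) (x : Fin n) :
    (x : ℕ) + A = ((x + (A : Fin n) : Fin n) : ℕ) + n * (((x : ℕ) + A) / n) := by
  have h1 : ((x + (A : Fin n) : Fin n) : ℕ) = ((x : ℕ) + A) % n := by
    rw [Fin.add_def]
    simp only [Fin.val_natCast]
    congr 1
    rw [Nat.mod_eq_of_lt hA]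
  rw [h1]
  exact (Nat.mod_add_div _ _).symm

section Affine
variable {E : Type*} [NormedAddCommGroup E] [NormedSpace ℝ E]

lemma affineIsometryEquiv_apply_eq (f : E ≃ᵃⁱ[ℝ] E) (y : E) :
    f y = f.toAffineEquiv.toAffineMap.linear y + f 0 := by
  have h := f.toAffineEquiv.toAffineMap.linearMap_vsub y 0
  simp only [vsub_eq_sub, sub_zero] at h
  have h2 : f.toAffineEquiv.toAffineMap y = f y := rfl
  have h3 : f.toAffineEquiv.toAffineMap 0 = f 0 := rfl
  rw [h2, h3] at h
  rw [h]
  abel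

lemma affine_smul_sum (f : E ≃ᵃⁱ[ℝ] E) {α : Type*} (s : Finset α) (v : α → E)
    (hs : s.Nonempty) :
    f ((s.card : ℝ)⁻¹ • ∑ i ∈ s, v i) = (s.card : ℝ)⁻¹ • ∑ i ∈ s, f (v i) := by
  have hcard : (s.card : ℝ) ≠ 0 := by
    simp [Finset.card_ne_zero_of_mem hs.choose_spec]
  set L := f.toAffineEquiv.toAffineMap.linear with hL
  have key := affineIsometryEquiv_apply_eq f
  rw [key]
  have h1 : L ((s.card : ℝ)⁻¹ • ∑ i ∈ s, v i) = (s.card : ℝ)⁻¹ • ∑ i ∈ s, L (v i) := by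
    rw [map_smul, map_sum]
  rw [h1]
  have h2 : ∀ i, f (v i) = L (v i) + f 0 := fun i => key (v i)
  rw [Finset.sum_congr rfl (fun i _ => h2 i), Finset.sum_add_distrib, smul_add,
    Finset.sum_const]
  have h4 : (s.card : ℝ)⁻¹ • (s.card • f 0 : E) = f 0 := by
    rw [← Nat.cast_smul_eq_nsmul ℝ, smul_smul, inv_mul_cancel₀ hcard, one_smul]
  rw [h4]

lemma norm_z_sum_le {m : ℕ} (ρ : Heisenberg (MvPolynomial (Fin m) ℤ) →* (E ≃ᵃⁱ[ℝ] E)) (ξ : E)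
    {α : Type*} [DecidableEq α] (t : Finset α) (h : α → MvPolynomial (Fin m) ℤ) :
    ‖(ρ (Heisenberg.z (∑ v ∈ t, h v))) ξ - ξ‖ ≤ ∑ v ∈ t, ‖(ρ (Heisenberg.z (h v))) ξ - ξ‖ := by
  induction t using Finset.induction_on with
  | empty => simp [Heisenberg.z_zero]
  | @insert a s ha ih =>
    rw [Finset.sum_insert ha, Finset.sum_insert ha, Heisenberg.z_add, map_mul]
    have h1 : (ρ (Heisenberg.z (h a)) * ρ (Heisenberg.z (∑ v ∈ s, h v))) ξ
        = ρ (Heisenberg.z (h a)) (ρ (Heisenberg.z (∑ v ∈ s, h v)) ξ) := rfl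
    rw [h1]
    have h2 := norm_sub_le_norm_sub_add_norm_sub
      (ρ (Heisenberg.z (h a)) (ρ (Heisenberg.z (∑ v ∈ s, h v)) ξ)) (ρ (Heisenberg.z (h a)) ξ) ξ
    have h3 : ‖ρ (Heisenberg.z (h a)) (ρ (Heisenberg.z (∑ v ∈ s, h v)) ξ)
        - ρ (Heisenberg.z (h a)) ξ‖ = ‖ρ (Heisenberg.z (∑ v ∈ s, h v)) ξ - ξ‖ := by
      rw [← dist_eq_norm, ← dist_eq_norm]
      exact (ρ (Heisenberg.z (h a))).dist_map _ _
    rw [h3] at h2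
    calc _ ≤ _ := h2
      _ ≤ _ := by
          rw [add_comm]
          exact add_le_add le_rfl ih

end Affine

set_option maxHeartbeats 1000000 in
/-- There is a universal constant `C > 0` with the following property.
Fix `m ≥ 1` and let `d, d', d₂ ∈ ℕ` with `d ≤ d₂` and `d' ≤ d₂`.  For every real Banach
space `E`, every affine isometric action `ρ` of `H₃(ℤ[t₁, …, t_m])` on `E`, every
`ξ ∈ E` and every `p ∈ Poly(d, d')`, writing `η` for the `Poly(d₂,d₂)`-average of the
`ρ(z(q))ξ`, one has
`‖ρ(z(p))η − η‖ ≤ C·(d+m)^m·(1/2)^(d₂−d')·max_{t̲ ∈ B^d} ‖ξ − ρ(z(2^{d₂}·t̲))ξ‖`. -/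
theorem z_move_bound :
    ∃ C : ℝ, 0 < C ∧
      ∀ (m : ℕ), 1 ≤ m → ∀ d d' d₂ : ℕ, d ≤ d₂ → d' ≤ d₂ →
        ∀ (E : Type*) [NormedAddCommGroup E] [NormedSpace ℝ E] [CompleteSpace E],
          ∀ (ρ : Heisenberg (MvPolynomial (Fin m) ℤ) →* (E ≃ᵃⁱ[ℝ] E)) (ξ : E),
            ∀ p ∈ PolyFinset m d d',
              ‖(ρ (Heisenberg.z p)) (zAvg ρ d₂ ξ) - zAvg ρ d₂ ξ‖ ≤
                C * ((d : ℝ) + m) ^ m * (1 / 2 : ℝ) ^ (d₂ - d') *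
                  sSup {r : ℝ | ∃ t ∈ BSet m d,
                    r = ‖ξ - (ρ (Heisenberg.z ((2 ^ d₂ : MvPolynomial (Fin m) ℤ) * t))) ξ‖} := by
  classical
  refine ⟨1, one_pos, ?_⟩
  intro m hm d d' d₂ hdd₂ hd'd₂ E _ _ _ ρ ξ p hp
  set n : ℕ := 2 ^ d₂ with hn
  have hnpos : 0 < n := by positivity
  haveI : NeZero n := ⟨hnpos.ne'⟩
  obtain ⟨a, -, hpa0⟩ := Finset.mem_image.mp hp
  have hpa : ∑ w : DegIdx m d, MvPolynomial.C ((a w : ℕ) : ℤ) * monOf w = p := hpa0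
  -- the extended coefficient function
  set atil : DegIdx m d₂ → ℕ :=
    Function.extend (degCast hdd₂) (fun w => ((a w : ℕ))) (fun _ => 0) with hatil
  have h_atil_lt : ∀ v, atil v < 2 ^ d' := by
    intro v
    by_cases hv : ∃ w, degCast hdd₂ w = v
    · obtain ⟨w, rfl⟩ := hv
      rw [hatil, (degCast_injective hdd₂).extend_apply]
      exact (a w).isLt
    · rw [hatil, Function.extend_apply' _ _ _ hv]
      positivity
  have h_atil_n : ∀ v, atil v < n := fun v =>
    lt_of_lt_of_le (h_atil_lt v) (by rw [hn]; exact Nat.pow_le_pow_right (by norm_num) hd'd₂)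
  have h_img : ∀ v : DegIdx m d₂, v ∉ Finset.image (degCast hdd₂) Finset.univ → atil v = 0 := by
    intro v hv
    rw [hatil, Function.extend_apply']
    rintro ⟨w, hw⟩
    exact hv (Finset.mem_image.mpr ⟨w, Finset.mem_univ w, hw⟩)
  have hp_repr : p = ∑ v : DegIdx m d₂, MvPolynomial.C ((atil v : ℤ)) * monOf v := by
    rw [← hpa]
    rw [← Finset.sum_subset (Finset.subset_univ (Finset.image (degCast hdd₂) Finset.univ))
      (fun v _ hv => by rw [h_img v hv]; simp)]
    rw [Finset.sum_image (fun x _ y _ h => degCast_injective hdd₂ h)]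
    refine (Finset.sum_congr rfl fun w _ => ?_).symm
    rw [hatil, (degCast_injective hdd₂).extend_apply, monOf_degCast]
  -- shift data
  set F : (DegIdx m d₂ → Fin n) → MvPolynomial (Fin m) ℤ :=
    fun c => ∑ v : DegIdx m d₂, MvPolynomial.C ((c v : ℕ) : ℤ) * monOf v with hF
  set b : DegIdx m d₂ → Fin n := fun v => (Fin.ofNat n (atil v)) with hb
  set σf : (DegIdx m d₂ → Fin n) → (DegIdx m d₂ → Fin n) := fun c => c + b with hσ
  set o : (DegIdx m d₂ → Fin n) → DegIdx m d₂ → ℕ :=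
    fun c v => (((c v : ℕ)) + atil v) / n with ho
  have ho_le : ∀ c v, o c v ≤ 1 := by
    intro c v
    have h1 := (c v).isLt
    have h2 := h_atil_n v
    have h3 : o c v < 2 := (Nat.div_lt_iff_lt_mul hnpos).mpr (by omega)
    omega
  have ho_zero : ∀ c v, atil v = 0 → o c v = 0 := by
    intro c v hv
    simp only [ho, hv, add_zero]
    exact Nat.div_eq_of_lt (c v).isLt
  have h_decomp : ∀ c v, ((c v : ℕ)) + atil v = ((σf c v : ℕ)) + n * o c v := by
    intro c v
    have h := fin_add_decomp (n := n) (h_atil_n v) (c v)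
    simpa [hσ, hb, ho] using h
  have hkey : ∀ c, p + F c = F (σf c)
      + MvPolynomial.C ((n : ℤ)) * ∑ v : DegIdx m d₂, MvPolynomial.C ((o c v : ℤ)) * monOf v := by
    intro c
    rw [hp_repr, hF]
    simp only []
    rw [← Finset.sum_add_distrib, Finset.mul_sum, ← Finset.sum_add_distrib]
    refine Finset.sum_congr rfl fun v _ => ?_
    have hnat := h_decomp c v
    have harith : ((atil v : ℤ)) + ((c v : ℕ) : ℤ)
        = (((σf c v : ℕ) : ℤ)) + (n : ℤ) * (o c v : ℤ) := by
      have hz := congrArg (fun t : ℕ => (t : ℤ)) hnat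
      push_cast at hz
      linarith
    calc MvPolynomial.C ((atil v : ℤ)) * monOf v + MvPolynomial.C ((c v : ℕ) : ℤ) * monOf v
        = MvPolynomial.C ((atil v : ℤ) + ((c v : ℕ) : ℤ)) * monOf v := by
          rw [MvPolynomial.C_add, add_mul]
      _ = MvPolynomial.C ((((σf c v : ℕ) : ℤ)) + (n : ℤ) * (o c v : ℤ)) * monOf v := by
          rw [harith]
      _ = _ := by rw [MvPolynomial.C_add, MvPolynomial.C_mul, add_mul, mul_assoc]
  -- the action on points
  set u : MvPolynomial (Fin m) ℤ → E := fun q => ρ (Heisenberg.z q) ξ with hu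
  have hu_mul : ∀ q r, ρ (Heisenberg.z q) (u r) = u (q + r) := by
    intro q r
    rw [hu]
    simp only []
    rw [Heisenberg.z_add, map_mul]
    rfl
  set N : ℕ := Fintype.card (DegIdx m d₂ → Fin n) with hN
  have hNpos : 0 < N := Fintype.card_pos
  have hcard_pf : (PolyFinset m d₂ d₂).card = N := by
    rw [PolyFinset, Finset.card_image_of_injective _ (polyRep_injective m d₂ d₂),
      Finset.card_univ, hN]
  have hsum_pf : ∑ q ∈ PolyFinset m d₂ d₂, u q = ∑ c : DegIdx m d₂ → Fin n, u (F c) := by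
    rw [PolyFinset, Finset.sum_image (fun x _ y _ h => polyRep_injective m d₂ d₂ h)]
  set η := zAvg ρ d₂ ξ with hη
  have hηeq : η = (N : ℝ)⁻¹ • ∑ c : DegIdx m d₂ → Fin n, u (F c) := by
    rw [hη, zAvg, hcard_pf, hsum_pf]
  have hσbij : Function.Bijective σf := by
    have h : σf = fun c => Equiv.addRight b c := by funext c; rw [hσ]; simp
    rw [h]
    exact (Equiv.addRight b).bijective
  have hηeq2 : η = (N : ℝ)⁻¹ • ∑ c : DegIdx m d₂ → Fin n, u (F (σf c)) := by
    have hss : ∑ c : DegIdx m d₂ → Fin n, u (F (σf c)) = ∑ c : DegIdx m d₂ → Fin n, u (F c) :=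
      Fintype.sum_bijective σf hσbij (fun c => u (F (σf c))) (fun c => u (F c)) (fun c => rfl)
    rw [hηeq, ← hss]
  have hρη : ρ (Heisenberg.z p) η = (N : ℝ)⁻¹ • ∑ c : DegIdx m d₂ → Fin n, u (p + F c) := by
    rw [hηeq]
    have h := affine_smul_sum (ρ (Heisenberg.z p)) (Finset.univ : Finset (DegIdx m d₂ → Fin n))
      (fun c => u (F c)) Finset.univ_nonempty
    rw [Finset.card_univ, ← hN] at h
    rw [h]
    congr 1
    exact Finset.sum_congr rfl fun c _ => hu_mul p (F c)
  have hdiff : ρ (Heisenberg.z p) η - η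
      = (N : ℝ)⁻¹ • ∑ c : DegIdx m d₂ → Fin n, (u (p + F c) - u (F (σf c))) := by
    rw [hρη]
    conv_lhs => rw [hηeq2]
    rw [← smul_sub, ← Finset.sum_sub_distrib]
  rw [hdiff]
  -- the sSup bound
  set MS : Set ℝ := {r : ℝ | ∃ t ∈ BSet m d,
    r = ‖ξ - (ρ (Heisenberg.z ((2 ^ d₂ : MvPolynomial (Fin m) ℤ) * t))) ξ‖} with hMS
  set M : ℝ := sSup MS with hMdef
  have hMmem : ∀ w : DegIdx m d,
      ‖ξ - (ρ (Heisenberg.z ((2 ^ d₂ : MvPolynomial (Fin m) ℤ) * monOf w))) ξ‖ ∈ MS := by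
    intro w
    exact ⟨monOf w, ⟨fun i => ((w.1 i : ℕ)), w.2, rfl⟩, rfl⟩
  have hbdd : BddAbove MS := by
    apply Set.Finite.bddAbove
    apply Set.Finite.subset (Set.finite_range
      (fun w : DegIdx m d =>
        ‖ξ - (ρ (Heisenberg.z ((2 ^ d₂ : MvPolynomial (Fin m) ℤ) * monOf w))) ξ‖))
    rintro r ⟨t, ⟨v, hvd, rfl⟩, rfl⟩
    refine ⟨⟨fun i => ⟨v i, ?_⟩, ?_⟩, ?_⟩
    · have h1 : v i ≤ ∑ j, v j :=
        Finset.single_le_sum (fun j _ => Nat.zero_le _) (Finset.mem_univ i)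
      omega
    · simpa using hvd
    · rfl
  have hM0 : 0 ≤ M :=
    le_trans (norm_nonneg _) (le_csSup hbdd (hMmem ⟨fun _ => ⟨0, by omega⟩, by simp⟩))
  have hMle : ∀ w : DegIdx m d,
      ‖(ρ (Heisenberg.z ((2 ^ d₂ : MvPolynomial (Fin m) ℤ) * monOf w))) ξ - ξ‖ ≤ M := by
    intro w
    rw [norm_sub_rev]
    exact le_csSup hbdd (hMmem w)
  -- per-term bound
  have hperc : ∀ c : DegIdx m d₂ → Fin n,
      ‖u (p + F c) - u (F (σf c))‖
        ≤ ((Finset.univ.filter (fun v => o c v = 1)).card : ℝ) * M := by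
    intro c
    rw [hkey c]
    have e1 : u (F (σf c)
        + MvPolynomial.C ((n : ℤ)) * ∑ v : DegIdx m d₂, MvPolynomial.C ((o c v : ℤ)) * monOf v)
        = ρ (Heisenberg.z (F (σf c)))
          (u (MvPolynomial.C ((n : ℤ))
            * ∑ v : DegIdx m d₂, MvPolynomial.C ((o c v : ℤ)) * monOf v)) := (hu_mul _ _).symm
    rw [e1]
    have e2 : ‖ρ (Heisenberg.z (F (σf c)))
          (u (MvPolynomial.C ((n : ℤ))
            * ∑ v : DegIdx m d₂, MvPolynomial.C ((o c v : ℤ)) * monOf v)) - u (F (σf c))‖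
        = ‖u (MvPolynomial.C ((n : ℤ))
            * ∑ v : DegIdx m d₂, MvPolynomial.C ((o c v : ℤ)) * monOf v) - ξ‖ := by
      have h0 : u (F (σf c)) = ρ (Heisenberg.z (F (σf c))) ξ := rfl
      rw [h0, ← dist_eq_norm, ← dist_eq_norm, AffineIsometryEquiv.dist_map]
    rw [e2]
    have hCn : MvPolynomial.C ((n : ℤ)) = (2 ^ d₂ : MvPolynomial (Fin m) ℤ) := by
      rw [hn]
      push_cast
      rw [map_pow, map_ofNat]
    have hCS : MvPolynomial.C ((n : ℤ))
          * ∑ v : DegIdx m d₂, MvPolynomial.C ((o c v : ℤ)) * monOf v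
        = ∑ v ∈ Finset.univ.filter (fun v => o c v = 1),
            (2 ^ d₂ : MvPolynomial (Fin m) ℤ) * monOf v := by
      rw [Finset.mul_sum]
      rw [← Finset.sum_subset (Finset.filter_subset (fun v => o c v = 1) Finset.univ) ?_]
      · refine Finset.sum_congr rfl fun v hv => ?_
        have h1 : o c v = 1 := (Finset.mem_filter.mp hv).2
        rw [h1, hCn]
        simp
      · intro v _ hv
        have h1 : o c v = 0 := by
          have h2 := ho_le c v
          simp only [Finset.mem_filter, Finset.mem_univ, true_and] at hv
          omega
        rw [h1]
        simp
    rw [hCS]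
    calc ‖u (∑ v ∈ Finset.univ.filter (fun v => o c v = 1),
            (2 ^ d₂ : MvPolynomial (Fin m) ℤ) * monOf v) - ξ‖
        ≤ ∑ v ∈ Finset.univ.filter (fun v => o c v = 1),
            ‖(ρ (Heisenberg.z ((2 ^ d₂ : MvPolynomial (Fin m) ℤ) * monOf v))) ξ - ξ‖ :=
          norm_z_sum_le ρ ξ _ _
      _ ≤ (Finset.univ.filter (fun v => o c v = 1)).card • M := by
          refine Finset.sum_le_card_nsmul _ _ M fun v hv => ?_
          have h1 : o c v = 1 := (Finset.mem_filter.mp hv).2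
          have h2 : atil v ≠ 0 := by
            intro h
            rw [ho_zero c v h] at h1
            omega
          obtain ⟨w, rfl⟩ : ∃ w, degCast hdd₂ w = v := by
            by_contra hcon
            exact h2 (by rw [hatil, Function.extend_apply' _ _ _ hcon])
          rw [monOf_degCast]
          exact hMle w
      _ = ((Finset.univ.filter (fun v => o c v = 1)).card : ℝ) * M := nsmul_eq_mul _ _
  -- counting
  set T : ℕ := ∑ c : DegIdx m d₂ → Fin n, (Finset.univ.filter (fun v => o c v = 1)).card
    with hT
  have hsum2 : ∑ c : DegIdx m d₂ → Fin n, ‖u (p + F c) - u (F (σf c))‖ ≤ (T : ℝ) * M := by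
    calc ∑ c : DegIdx m d₂ → Fin n, ‖u (p + F c) - u (F (σf c))‖
        ≤ ∑ c : DegIdx m d₂ → Fin n,
            ((Finset.univ.filter (fun v => o c v = 1)).card : ℝ) * M :=
          Finset.sum_le_sum fun c _ => hperc c
      _ = (T : ℝ) * M := by
          rw [← Finset.sum_mul, hT, Nat.cast_sum]
  have hTcount : T * n ≤ N * ∑ v : DegIdx m d₂, atil v := by
    have hc1 : ∀ c : DegIdx m d₂ → Fin n,
        (Finset.univ.filter (fun v => o c v = 1)).card = ∑ v : DegIdx m d₂, o c v := by
      intro c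
      rw [Finset.card_filter]
      refine Finset.sum_congr rfl fun v _ => ?_
      have h1 := ho_le c v
      split <;> omega
    have hc2 : ∀ v : DegIdx m d₂, ∑ c : DegIdx m d₂ → Fin n, o c v
        = Fintype.card ({w : DegIdx m d₂ // w ≠ v} → Fin n)
          * ∑ x : Fin n, ((x : ℕ) + atil v) / n := by
      intro v
      rw [← Fintype.sum_equiv ((Equiv.piSplitAt v (fun _ : DegIdx m d₂ => Fin n)).symm)
        (fun q => ((q.1 : ℕ) + atil v) / n) (fun c => o c v)
        (fun q => by simp [ho, Equiv.piSplitAt_symm_apply])]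
      rw [Fintype.sum_prod_type]
      simp only [Finset.sum_const, Finset.card_univ, smul_eq_mul]
      rw [← Finset.mul_sum]
    have hc3 : ∀ v : DegIdx m d₂,
        Fintype.card ({w : DegIdx m d₂ // w ≠ v} → Fin n) * n = N := by
      intro v
      rw [hN, Fintype.card_congr (Equiv.piSplitAt v (fun _ : DegIdx m d₂ => Fin n)),
        Fintype.card_prod, Fintype.card_fin, mul_comm]
    calc T * n = (∑ v : DegIdx m d₂, ∑ c : DegIdx m d₂ → Fin n, o c v) * n := by
          rw [hT, Finset.sum_congr rfl (fun c _ => hc1 c), Finset.sum_comm]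
      _ = ∑ v : DegIdx m d₂, (∑ c : DegIdx m d₂ → Fin n, o c v) * n := by
          rw [Finset.sum_mul]
      _ ≤ ∑ v : DegIdx m d₂, N * atil v := by
          refine Finset.sum_le_sum fun v _ => ?_
          rw [hc2 v]
          calc Fintype.card ({w : DegIdx m d₂ // w ≠ v} → Fin n)
                * (∑ x : Fin n, ((x : ℕ) + atil v) / n) * n
              ≤ Fintype.card ({w : DegIdx m d₂ // w ≠ v} → Fin n) * atil v * n :=
                Nat.mul_le_mul_right _ (Nat.mul_le_mul_left _
                  (fin_overflow_sum hnpos (le_of_lt (h_atil_n v))))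
            _ = N * atil v := by rw [mul_right_comm, hc3 v]
      _ = N * ∑ v : DegIdx m d₂, atil v := by rw [Finset.mul_sum]
  have hAbound : (∑ v : DegIdx m d₂, atil v) ≤ Fintype.card (DegIdx m d) * 2 ^ d' := by
    have h1 : ∑ v : DegIdx m d₂, atil v = ∑ w : DegIdx m d, atil (degCast hdd₂ w) := by
      rw [← Finset.sum_subset (Finset.subset_univ (Finset.image (degCast hdd₂) Finset.univ))
        (fun v _ hv => h_img v hv)]
      rw [Finset.sum_image (fun x _ y _ h => degCast_injective hdd₂ h)]
    rw [h1]
    calc ∑ w : DegIdx m d, atil (degCast hdd₂ w) ≤ ∑ _w : DegIdx m d, 2 ^ d' :=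
          Finset.sum_le_sum fun w _ => le_of_lt (h_atil_lt _)
      _ = Fintype.card (DegIdx m d) * 2 ^ d' := by
          rw [Finset.sum_const, Finset.card_univ, smul_eq_mul]
  -- final estimates
  have hnR : (0 : ℝ) < (n : ℝ) := by exact_mod_cast hnpos
  have hNR : (0 : ℝ) < (N : ℝ) := by exact_mod_cast hNpos
  have hfin1 : (T : ℝ) ≤ (N : ℝ) * (((∑ v : DegIdx m d₂, atil v : ℕ) : ℝ)) / (n : ℝ) := by
    rw [le_div_iff₀ hnR]
    exact_mod_cast hTcount
  have hDcard : ((Fintype.card (DegIdx m d) : ℝ)) ≤ ((d : ℝ) + m) ^ m := by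
    calc ((Fintype.card (DegIdx m d) : ℝ)) ≤ (((d + 1 : ℕ) : ℝ)) ^ m := by
          exact_mod_cast card_degIdx_le m d
      _ ≤ ((d : ℝ) + m) ^ m := by
          apply pow_le_pow_left₀ (by positivity)
          push_cast
          have h1 : (1 : ℝ) ≤ (m : ℝ) := by exact_mod_cast hm
          linarith
  have hhalf : ((2 : ℝ) ^ d') / (n : ℝ) = (1 / 2 : ℝ) ^ (d₂ - d') := by
    have hcast : ((n : ℕ) : ℝ) = 2 ^ d₂ := by rw [hn]; push_cast; ring
    rw [hcast, show (2 : ℝ) ^ d₂ = 2 ^ d' * 2 ^ (d₂ - d') from by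
      rw [← pow_add, Nat.add_sub_cancel' hd'd₂], div_pow, one_pow]
    rw [div_eq_div_iff (by positivity) (by positivity)]
    ring
  have hnorm1 : ‖(N : ℝ)⁻¹ • ∑ c : DegIdx m d₂ → Fin n, (u (p + F c) - u (F (σf c)))‖
      ≤ (N : ℝ)⁻¹ * ∑ c : DegIdx m d₂ → Fin n, ‖u (p + F c) - u (F (σf c))‖ := by
    rw [norm_smul, Real.norm_eq_abs, abs_of_nonneg (by positivity)]
    exact mul_le_mul_of_nonneg_left (norm_sum_le _ _) (by positivity)
  set AR : ℝ := ((∑ v : DegIdx m d₂, atil v : ℕ) : ℝ) with hAR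
  have hAR0 : 0 ≤ AR := by positivity
  calc ‖(N : ℝ)⁻¹ • ∑ c : DegIdx m d₂ → Fin n, (u (p + F c) - u (F (σf c)))‖
      ≤ (N : ℝ)⁻¹ * ∑ c : DegIdx m d₂ → Fin n, ‖u (p + F c) - u (F (σf c))‖ := hnorm1
    _ ≤ (N : ℝ)⁻¹ * ((T : ℝ) * M) :=
        mul_le_mul_of_nonneg_left hsum2 (by positivity)
    _ ≤ (N : ℝ)⁻¹ * (((N : ℝ) * AR / (n : ℝ)) * M) :=
        mul_le_mul_of_nonneg_left (mul_le_mul_of_nonneg_right hfin1 hM0) (by positivity)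
    _ = (AR / (n : ℝ)) * M := by field_simp
    _ ≤ (((Fintype.card (DegIdx m d) * 2 ^ d' : ℕ) : ℝ) / (n : ℝ)) * M := by
        apply mul_le_mul_of_nonneg_right _ hM0
        apply div_le_div_of_nonneg_right ?_ hnR.le
        rw [hAR]
        exact_mod_cast hAbound
    _ = ((Fintype.card (DegIdx m d) : ℝ)) * ((2 : ℝ) ^ d' / (n : ℝ)) * M := by
        push_cast
        ring
    _ ≤ ((d : ℝ) + m) ^ m * ((1 / 2 : ℝ) ^ (d₂ - d')) * M := by
        rw [← hhalf]
        apply mul_le_mul_of_nonneg_right _ hM0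
        apply mul_le_mul_of_nonneg_right hDcard (by positivity)
    _ = 1 * ((d : ℝ) + m) ^ m * (1 / 2 : ℝ) ^ (d₂ - d') * M := by ring
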